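/- Let n = 3 and suppose λ₁(Θ) = π²/Θ² − 1 for Θ ∈ (0, π) (the first Dirichlet eigenvalue of the spherical cap of aperture Θ in S³). Then Θ ↦ (π²/Θ² − 1)·sin²(Θ) is strictly decreasing on (0, π). -/
import Mathlib

open Real Set

lemma cos_mul_lt_sin {x : ℝ} (h0 : 0 < x) (hπ : x < π) : Real.cos x * x < Real.sin x := by
  rcases lt_or_ge x (π / 2) with h | h
  · have hc : 0 < Real.cos x := Real.cos_pos_of_mem_Ioo ⟨by linarith [Real.pi_pos], h⟩
    have ht := Real.lt_tan h0 h
    rw [Real.tan_eq_sin_div_cos] at ht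
    calc Real.cos x * x < Real.cos x * (Real.sin x / Real.cos x) := by
          exact mul_lt_mul_of_pos_left ht hc
      _ = Real.sin x := by field_simp
  · have hc : Real.cos x ≤ 0 :=
      Real.cos_nonpos_of_pi_div_two_le_of_le h (by linarith [Real.pi_pos])
    have hs : 0 < Real.sin x := Real.sin_pos_of_pos_of_lt_pi h0 hπ
    nlinarith

lemma sinc_strictAntiOn : StrictAntiOn (fun x : ℝ => Real.sin x / x) (Set.Ioo 0 Real.pi) := by
  apply strictAntiOn_of_deriv_neg (convex_Ioo 0 π)
  · exact Real.continuous_sin.continuousOn.div continuousOn_id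
      (fun x hx => ne_of_gt hx.1)
  · intro x hx
    rw [interior_Ioo] at hx
    have hx0 : x ≠ 0 := ne_of_gt hx.1
    have hd : HasDerivAt (fun x : ℝ => Real.sin x / x)
        ((Real.cos x * x - Real.sin x * 1) / x ^ 2) x :=
      (Real.hasDerivAt_sin x).div (hasDerivAt_id x) hx0
    rw [hd.deriv]
    apply div_neg_of_neg_of_pos
    · have := cos_mul_lt_sin hx.1 hx.2
      linarith
    · positivity

theorem sphere_three_dim_scaled_eigenvalue_strictAntiOn :
    StrictAntiOn
      (fun Θ : ℝ => (Real.pi ^ 2 / Θ ^ 2 - 1) * Real.sin Θ ^ 2)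
      (Set.Ioo 0 Real.pi) := by
  intro a ha b hb hab
  have key : ∀ x ∈ Set.Ioo (0:ℝ) π,
      (Real.pi ^ 2 / x ^ 2 - 1) * Real.sin x ^ 2
        = (π ^ 2 - x ^ 2) * (Real.sin x / x) ^ 2 := by
    intro x hx
    have hx0 : x ≠ 0 := ne_of_gt hx.1
    field_simp
  simp only [key a ha, key b hb]
  have hsa : 0 < Real.sin a / a :=
    div_pos (Real.sin_pos_of_pos_of_lt_pi ha.1 ha.2) ha.1
  have hsb : 0 < Real.sin b / b :=
    div_pos (Real.sin_pos_of_pos_of_lt_pi hb.1 hb.2) hb.1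
  have hlt : Real.sin b / b < Real.sin a / a := sinc_strictAntiOn ha hb hab
  have h1 : (Real.sin b / b) ^ 2 < (Real.sin a / a) ^ 2 := by nlinarith
  have h2 : π ^ 2 - b ^ 2 < π ^ 2 - a ^ 2 := by nlinarith [ha.1]
  have h3 : 0 < π ^ 2 - b ^ 2 := by nlinarith [hb.1, hb.2]
  nlinarith
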